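/- In the block-model Dirichlet problem (seeds of block 1 at temperature 1, other seeds at 0), the mean temperature satisfies T̄ = (s_1/n · (n_1(p-q)+nq)/(s_1(p-q)+nq)) / (1 - ∑_{k=1}^K (n_k - s_k)q/(s_k(p-q)+nq)). -/

import Mathlib

/-- Block model: closed form for the mean temperature
`T̄ = (s₁/n · (n₁(p-q)+nq)/(s₁(p-q)+nq)) / (1 - ∑_k (n_k-s_k)q/(s_k(p-q)+nq))`. -/
theorem block_model_mean_temperature (K : ℕ) [NeZero K]
    (nv sv : Fin K → ℕ) (hs : ∀ k, 0 < sv k ∧ sv k < nv k)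
    (p q : ℝ) (hp : 0 < p) (hq : 0 < q)
    (n : ℕ) (hn : n = ∑ k, nv k)
    (T : Fin K → ℝ)
    (hbal : ∀ k, ((nv k : ℝ) * (p - q) + (n : ℝ) * q) * T k =
      (sv 0 : ℝ) * (if k = 0 then p else q) + ((nv k : ℝ) - (sv k : ℝ)) * p * T k +
        ∑ j ∈ Finset.univ.erase k, ((nv j : ℝ) - (sv j : ℝ)) * q * T j)
    (Tbar : ℝ)
    (hTbar : Tbar = ((sv 0 : ℝ) + ∑ j, ((nv j : ℝ) - (sv j : ℝ)) * T j) / (n : ℝ)) :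
    Tbar = ((sv 0 : ℝ) / (n : ℝ) *
        (((nv 0 : ℝ) * (p - q) + (n : ℝ) * q) / ((sv 0 : ℝ) * (p - q) + (n : ℝ) * q))) /
      (1 - ∑ k, ((nv k : ℝ) - (sv k : ℝ)) * q / ((sv k : ℝ) * (p - q) + (n : ℝ) * q)) := by
  -- abbreviations
  set c : Fin K → ℝ := fun k => if k = 0 then p else q with hc
  set S : ℝ := ∑ j, ((nv j : ℝ) - (sv j : ℝ)) * T j with hSS
  set B : ℝ := ∑ k, ((nv k : ℝ) - (sv k : ℝ)) * q / ((sv k : ℝ) * (p - q) + (n : ℝ) * q)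
    with hBB
  set A : ℝ := ∑ k, ((nv k : ℝ) - (sv k : ℝ)) * ((sv 0 : ℝ) * c k) /
      ((sv k : ℝ) * (p - q) + (n : ℝ) * q) with hAA
  -- basic positivity facts
  have hsv : ∀ k, (0:ℝ) < sv k := fun k => by exact_mod_cast (hs k).1
  have hns : ∀ k, (sv k : ℝ) < nv k := fun k => by exact_mod_cast (hs k).2
  have hsn : ∀ k, (nv k : ℝ) ≤ n := by
    intro k
    have : nv k ≤ n := hn ▸ Finset.single_le_sum (fun j _ => Nat.zero_le _) (Finset.mem_univ k)
    exact_mod_cast this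
  have hn0 : (0:ℝ) < n := lt_of_lt_of_le (lt_trans (hsv 0) (hns 0)) (hsn 0)
  have hd : ∀ k, 0 < (sv k : ℝ) * (p - q) + (n : ℝ) * q := by
    intro k
    have h1 := hsv k
    have h2 : (sv k : ℝ) ≤ n := le_trans (le_of_lt (hns k)) (hsn k)
    nlinarith
  -- key equation: d_k * T_k = s₀ c_k + q S
  have hkey : ∀ k, ((sv k : ℝ) * (p - q) + (n : ℝ) * q) * T k = (sv 0 : ℝ) * c k + q * S := by
    intro k
    have h := hbal k
    rw [Finset.sum_erase_eq_sub (Finset.mem_univ k)] at h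
    have hsum : ∑ j, ((nv j : ℝ) - (sv j : ℝ)) * q * T j = q * S := by
      rw [hSS, Finset.mul_sum]; exact Finset.sum_congr rfl fun j _ => by ring
    rw [hsum] at h
    have hck : c k = if k = 0 then p else q := rfl
    rw [← hck] at h
    linear_combination h
  have hT : ∀ k, T k = ((sv 0 : ℝ) * c k + q * S) / ((sv k : ℝ) * (p - q) + (n : ℝ) * q) := by
    intro k
    rw [eq_div_iff (hd k).ne']
    linear_combination hkey k
  -- total free mass M
  set M : ℝ := ∑ k, ((nv k : ℝ) - (sv k : ℝ)) with hMM
  have hMk : ∀ k, (0:ℝ) < (nv k : ℝ) - (sv k : ℝ) := fun k => by linarith [hns k]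
  have hM : 0 < M := Finset.sum_pos (fun k _ => hMk k) Finset.univ_nonempty
  have hMn : ∀ k, M + (sv k : ℝ) ≤ n := by
    intro k
    have hsk : (sv k : ℝ) ≤ ∑ j, (sv j : ℝ) :=
      Finset.single_le_sum (fun j _ => (hsv j).le) (Finset.mem_univ k)
    have hMeq : M = (n : ℝ) - ∑ j, (sv j : ℝ) := by
      rw [hMM, Finset.sum_sub_distrib, hn]
      push_cast
      ring
    linarith [hMeq ▸ le_refl M]
  -- B < 1
  have hB : B < 1 := by
    have hlt : B < ∑ k, ((nv k : ℝ) - (sv k : ℝ)) / M := by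
      apply Finset.sum_lt_sum_of_nonempty Finset.univ_nonempty
      intro k _
      rw [div_lt_div_iff₀ (hd k) hM]
      have h1 := hMn k
      have h2 := hsv k
      have h3 := hMk k
      nlinarith [mul_pos h3 (mul_pos h2 hp),
        mul_nonneg h3.le (mul_nonneg hq.le (by linarith : (0:ℝ) ≤ (n:ℝ) - (sv k : ℝ) - M))]
    have heq : ∑ k, ((nv k : ℝ) - (sv k : ℝ)) / M = 1 := by
      rw [← Finset.sum_div, ← hMM, div_self hM.ne']
    linarith
  -- S (1 - B) = A
  have hSB : S * (1 - B) = A := by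
    have hS2 : S = ∑ k, ((nv k : ℝ) - (sv k : ℝ)) *
        (((sv 0 : ℝ) * c k + q * S) / ((sv k : ℝ) * (p - q) + (n : ℝ) * q)) := by
      conv_lhs => rw [hSS]
      exact Finset.sum_congr rfl fun k _ => by rw [← hT k]
    have hsplit : ∀ k ∈ Finset.univ, ((nv k : ℝ) - (sv k : ℝ)) *
        (((sv 0 : ℝ) * c k + q * S) / ((sv k : ℝ) * (p - q) + (n : ℝ) * q)) =
        ((nv k : ℝ) - (sv k : ℝ)) * ((sv 0 : ℝ) * c k) /
          ((sv k : ℝ) * (p - q) + (n : ℝ) * q) +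
        S * (((nv k : ℝ) - (sv k : ℝ)) * q / ((sv k : ℝ) * (p - q) + (n : ℝ) * q)) := by
      intro k _
      field_simp
    rw [Finset.sum_congr rfl hsplit, Finset.sum_add_distrib, ← Finset.mul_sum, ← hAA, ← hBB]
      at hS2
    linarith
  -- A - s₀ B concentrates on k = 0
  have hAB : A - (sv 0 : ℝ) * B = ((nv 0 : ℝ) - (sv 0 : ℝ)) * (sv 0 : ℝ) * (p - q) /
      ((sv 0 : ℝ) * (p - q) + (n : ℝ) * q) := by
    rw [hAA, hBB, Finset.mul_sum, ← Finset.sum_sub_distrib]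
    rw [Finset.sum_eq_single 0]
    · have : c 0 = p := by simp [hc]
      rw [this]; ring
    · intro k _ hk
      have : c k = q := by simp [hc, hk]
      rw [this]; ring
    · intro h; exact absurd (Finset.mem_univ 0) h
  -- final equation for s₀(1-B) + A
  have hfin : (sv 0 : ℝ) * (1 - B) + A = (sv 0 : ℝ) *
      (((nv 0 : ℝ) * (p - q) + (n : ℝ) * q) / ((sv 0 : ℝ) * (p - q) + (n : ℝ) * q)) := by
    have hAB' : (A - (sv 0 : ℝ) * B) * ((sv 0 : ℝ) * (p - q) + (n : ℝ) * q) =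
        ((nv 0 : ℝ) - (sv 0 : ℝ)) * (sv 0 : ℝ) * (p - q) := by
      rw [hAB, div_mul_cancel₀ _ (hd 0).ne']
    rw [← mul_div_assoc, eq_div_iff (hd 0).ne']
    linear_combination hAB'
  -- assemble
  rw [eq_div_iff (by linarith : 1 - B ≠ 0)]
  have h1 : Tbar * (1 - B) = ((sv 0 : ℝ) * (1 - B) + S * (1 - B)) / n := by
    rw [hTbar]; ring
  rw [h1, hSB, hfin]
  field_simp
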